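/- The Fock space F of semi-infinite forms is a cyclic module over the infinite Clifford algebra generated by the vacuum vector: the smallest ℂ-subspace of F containing |0⟩ = e_{H⁻} and invariant under all creation operators v_a and all annihilation operators w_a (a ∈ H) is F itself. -/

import Mathlib

open scoped Classical

/-- The set of half-integers `H = ℤ + 1/2`. -/
def HalfInt : Set ℚ := {q | ∃ n : ℤ, q = (n : ℚ) + 1/2}

/-- The negative half-integers `H⁻`. -/
def Hneg : Set ℚ := {q | q ∈ HalfInt ∧ q < 0}

/-- The positive half-integers `H⁺`. -/
def Hpos : Set ℚ := {q | q ∈ HalfInt ∧ 0 < q}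

/-- A Maya diagram: a set of half-integers whose symmetric difference with `H⁻` is finite. -/
structure Maya where
  carrier : Set ℚ
  subset_halfInt : carrier ⊆ HalfInt
  finite_symmDiff : (symmDiff carrier Hneg).Finite

/-- The Fock space of semi-infinite forms: the free ℂ-vector space on Maya diagrams. -/
abbrev Fock : Type := Maya →₀ ℂ

lemma symmDiff_insert_subset (a : ℚ) (S T : Set ℚ) :
    symmDiff (insert a S) T ⊆ insert a (symmDiff S T) := by
  intro x hx
  simp only [Set.mem_symmDiff, Set.mem_insert_iff] at *
  tauto

lemma symmDiff_diff_subset (a : ℚ) (S T : Set ℚ) :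
    symmDiff (S \ {a}) T ⊆ insert a (symmDiff S T) := by
  intro x hx
  simp only [Set.mem_symmDiff, Set.mem_insert_iff, Set.mem_diff,
    Set.mem_singleton_iff] at *
  tauto

/-- Adding a half-integer to a Maya diagram. -/
def Maya.insertCell (M : Maya) (a : ℚ) (ha : a ∈ HalfInt) : Maya where
  carrier := insert a M.carrier
  subset_halfInt := by
    intro x hx
    rcases hx with rfl | hx
    · exact ha
    · exact M.subset_halfInt hx
  finite_symmDiff :=
    Set.Finite.subset (M.finite_symmDiff.insert a) (symmDiff_insert_subset a _ _)

/-- Removing a half-integer from a Maya diagram. -/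
def Maya.eraseCell (M : Maya) (a : ℚ) : Maya where
  carrier := M.carrier \ {a}
  subset_halfInt := fun _ hx => M.subset_halfInt hx.1
  finite_symmDiff :=
    Set.Finite.subset (M.finite_symmDiff.insert a) (symmDiff_diff_subset a _ _)

/-- The sign `(-1)^{#{x ∈ S : x > a}}`. -/
noncomputable def sgn (S : Set ℚ) (a : ℚ) : ℂ := (-1) ^ (S ∩ Set.Ioi a).ncard

/-- The creation operator `v_a` (exterior multiplication by `v_a`). -/
noncomputable def creation (a : ↥HalfInt) : Fock →ₗ[ℂ] Fock :=
  Finsupp.lift Fock ℂ Maya fun M =>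
    if (a : ℚ) ∈ M.carrier then 0
    else sgn M.carrier a • Finsupp.single (M.insertCell a a.2) 1

/-- The annihilation operator `w_a` (contraction by `w_a`). -/
noncomputable def annihilation (a : ↥HalfInt) : Fock →ₗ[ℂ] Fock :=
  Finsupp.lift Fock ℂ Maya fun M =>
    if (a : ℚ) ∈ M.carrier then sgn M.carrier a • Finsupp.single (M.eraseCell a) 1
    else 0

/-- The Maya diagram `H⁻` of the vacuum. -/
def mayaVac : Maya where
  carrier := Hneg
  subset_halfInt := fun _ hx => hx.1
  finite_symmDiff := by
    simp only [symmDiff_self]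
    exact Set.finite_empty

/-- The vacuum vector `|0⟩ = e_{H⁻} = v_{−1/2} ∧ v_{−3/2} ∧ ⋯`. -/
noncomputable def vacuum : Fock := Finsupp.single mayaVac 1

lemma Maya.ext' {M N : Maya} (h : M.carrier = N.carrier) : M = N := by
  cases M; cases N; simpa using h

lemma sgn_mul_self (S : Set ℚ) (a : ℚ) : sgn S a * sgn S a = 1 := by
  simp [sgn, ← pow_add, ← two_mul, pow_mul]

lemma creation_single (a : ↥HalfInt) (M : Maya) :
    creation a (Finsupp.single M 1) =
      if (a : ℚ) ∈ M.carrier then 0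
      else sgn M.carrier a • Finsupp.single (M.insertCell a a.2) 1 := by
  rw [creation, Finsupp.lift_apply, Finsupp.sum_single_index, one_smul]
  exact zero_smul ℂ _

lemma annihilation_single (a : ↥HalfInt) (M : Maya) :
    annihilation a (Finsupp.single M 1) =
      if (a : ℚ) ∈ M.carrier then sgn M.carrier a • Finsupp.single (M.eraseCell a) 1
      else 0 := by
  rw [annihilation, Finsupp.lift_apply, Finsupp.sum_single_index, one_smul]
  exact zero_smul ℂ _

/-- the Fock space is a cyclic module over the infinite Clifford
algebra generated by the vacuum vector: the smallest ℂ-subspace of `F`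
containing `|0⟩` and invariant under all creation operators `v_a` and all
annihilation operators `w_a` (`a ∈ H`) is `F` itself. -/
theorem fock_cyclic_from_vacuum (p : Submodule ℂ Fock)
    (hvac : vacuum ∈ p)
    (hcr : ∀ (a : ↥HalfInt) (x : Fock), x ∈ p → creation a x ∈ p)
    (han : ∀ (a : ↥HalfInt) (x : Fock), x ∈ p → annihilation a x ∈ p) :
    p = ⊤ := by
  have key : ∀ (n : ℕ) (M : Maya), (symmDiff M.carrier Hneg).ncard = n →
      Finsupp.single M 1 ∈ p := by
    intro n
    induction n using Nat.strong_induction_on with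
    | _ n ih =>
      intro M hM
      rcases Nat.eq_zero_or_pos n with rfl | hpos
      · have hempty : symmDiff M.carrier Hneg = ∅ := by
          rw [← Set.ncard_eq_zero M.finite_symmDiff] at *
          exact hM
        have : M.carrier = Hneg :=
          symmDiff_eq_bot.mp (by rw [Set.bot_eq_empty]; exact hempty)
        have hMv : M = mayaVac := Maya.ext' this
        rw [hMv]; exact hvac
      · obtain ⟨a, ha⟩ : (symmDiff M.carrier Hneg).Nonempty := by
          rw [← Set.ncard_pos M.finite_symmDiff, hM]; exact hpos
        have haH : a ∈ HalfInt := by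
          rcases Set.mem_symmDiff.mp ha with ⟨h1, _⟩ | ⟨h1, _⟩
          · exact M.subset_halfInt h1
          · exact h1.1
        rcases Set.mem_symmDiff.mp ha with ⟨haM, haN⟩ | ⟨haN, haM⟩
        · -- a ∈ M, a ∉ Hneg : use creation on M.eraseCell a
          set M' := M.eraseCell a with hM'
          have hsub : symmDiff M'.carrier Hneg ⊆ (symmDiff M.carrier Hneg) \ {a} := by
            intro x hx
            simp only [hM', Maya.eraseCell, Set.mem_symmDiff, Set.mem_diff,
              Set.mem_singleton_iff] at *
            rcases hx with ⟨⟨h1, h2⟩, h3⟩ | ⟨h1, h2⟩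
            · exact ⟨Or.inl ⟨h1, h3⟩, h2⟩
            · have hxa : x ≠ a := fun h => haN (h ▸ h1)
              exact ⟨Or.inr ⟨h1, fun hxM => h2 ⟨hxM, hxa⟩⟩, hxa⟩
          have hlt : (symmDiff M'.carrier Hneg).ncard < n := by
            calc (symmDiff M'.carrier Hneg).ncard
                ≤ ((symmDiff M.carrier Hneg) \ {a}).ncard :=
                  Set.ncard_le_ncard hsub (M.finite_symmDiff.diff)
              _ < (symmDiff M.carrier Hneg).ncard :=
                  Set.ncard_diff_singleton_lt_of_mem ha M.finite_symmDiff
              _ = n := hM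
          have hM'p : Finsupp.single M' 1 ∈ p := ih _ (hM ▸ hlt) M' rfl
          have haM' : a ∉ M'.carrier := by
            simp [hM', Maya.eraseCell]
          have hins : M'.insertCell a haH = M := by
            apply Maya.ext'
            simp only [Maya.insertCell, hM', Maya.eraseCell]
            ext x
            simp only [Set.mem_insert_iff, Set.mem_diff, Set.mem_singleton_iff]
            constructor
            · rintro (rfl | ⟨h, _⟩) <;> assumption
            · intro hx
              by_cases hxa : x = a
              · exact Or.inl hxa
              · exact Or.inr ⟨hx, hxa⟩
          have hc := hcr ⟨a, haH⟩ _ hM'p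
          rw [creation_single] at hc
          simp only [haM', if_neg, if_false] at hc
          rw [hins] at hc
          have := p.smul_mem (sgn M'.carrier a) hc
          rwa [smul_smul, sgn_mul_self, one_smul] at this
        · -- a ∈ Hneg, a ∉ M : use annihilation on M.insertCell a
          set M' := M.insertCell a haH with hM'
          have hsub : symmDiff M'.carrier Hneg ⊆ (symmDiff M.carrier Hneg) \ {a} := by
            intro x hx
            simp only [hM', Maya.insertCell, Set.mem_symmDiff, Set.mem_diff,
              Set.mem_singleton_iff, Set.mem_insert_iff] at *
            rcases hx with ⟨h1, h2⟩ | ⟨h1, h2⟩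
            · have hxa : x ≠ a := fun h => h2 (h ▸ haN)
              rcases h1 with rfl | h1
              · exact absurd rfl hxa
              · exact ⟨Or.inl ⟨h1, h2⟩, hxa⟩
            · have hxa : x ≠ a := fun h => h2 (Or.inl h)
              exact ⟨Or.inr ⟨h1, fun hxM => h2 (Or.inr hxM)⟩, hxa⟩
          have hlt : (symmDiff M'.carrier Hneg).ncard < n := by
            calc (symmDiff M'.carrier Hneg).ncard
                ≤ ((symmDiff M.carrier Hneg) \ {a}).ncard :=
                  Set.ncard_le_ncard hsub (M.finite_symmDiff.diff)
              _ < (symmDiff M.carrier Hneg).ncard :=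
                  Set.ncard_diff_singleton_lt_of_mem ha M.finite_symmDiff
              _ = n := hM
          have hM'p : Finsupp.single M' 1 ∈ p := ih _ (hM ▸ hlt) M' rfl
          have haM' : a ∈ M'.carrier := by simp [hM', Maya.insertCell]
          have hers : M'.eraseCell a = M := by
            apply Maya.ext'
            simp only [Maya.eraseCell, hM', Maya.insertCell]
            ext x
            simp only [Set.mem_diff, Set.mem_singleton_iff, Set.mem_insert_iff]
            constructor
            · rintro ⟨rfl | h, hxa⟩
              · exact absurd rfl hxa
              · exact h
            · intro hx
              exact ⟨Or.inr hx, fun h => haM (h ▸ hx)⟩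
          have hc := han ⟨a, haH⟩ _ hM'p
          rw [annihilation_single] at hc
          simp only [haM', if_true] at hc
          rw [hers] at hc
          have := p.smul_mem (sgn M'.carrier a) hc
          rwa [smul_smul, sgn_mul_self, one_smul] at this
  have hall : ∀ M : Maya, Finsupp.single M 1 ∈ p := fun M => key _ M rfl
  rw [eq_top_iff]
  intro x hx
  clear hx
  induction x using Finsupp.induction_linear with
  | zero => exact p.zero_mem
  | add f g hf hg => exact p.add_mem hf hg
  | single M c =>
      have : Finsupp.single M c = c • Finsupp.single M 1 := by
        rw [Finsupp.smul_single, smul_eq_mul, mul_one]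
      rw [this]; exact p.smul_mem c (hall M)
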